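/- Suppose (X, Y) satisfies LSNMs in both directions with continuous Bernoulli noise of parameter λ ≠ 1/2: Y = f(X) + g(X)·E_Y and X = h(Y) + k(Y)·E_X, with E_Y, E_X ~ ContinuousBernoulli(λ) independent of the respective cause, g, k > 0 differentiable, and positive differentiable marginal densities. Then (1/g(x))' = (1/k(y))' for all x, y in the support; hence 1/g and 1/k are both constant or both affine with the same slope. -/
import Mathlib


/-- Identifiability with continuous Bernoulli noise (λ ≠ 1/2): if the joint
log-density equals that of a continuous-Bernoulli-noise LSNM in both directions,
then (1/g)' is everywhere equal to (1/k)'; hence 1/g and 1/k are both constant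
or both affine with the same slope. -/
theorem lsnm_continuous_bernoulli_identifiability (lam C : ℝ)
    (hlam0 : 0 < lam) (hlam1 : lam < 1) (hlamhalf : lam ≠ 1 / 2) (hC : 0 < C)
    (pX pY f g h k : ℝ → ℝ)
    (hpX : Differentiable ℝ pX) (hpY : Differentiable ℝ pY)
    (hf : Differentiable ℝ f) (hh : Differentiable ℝ h)
    (hgdiff : Differentiable ℝ g) (hkdiff : Differentiable ℝ k)
    (hpXpos : ∀ x, 0 < pX x) (hpYpos : ∀ y, 0 < pY y)
    (hgpos : ∀ x, 0 < g x) (hkpos : ∀ y, 0 < k y)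
    (hjoint : ∀ x y : ℝ,
      Real.log (pX x) - Real.log (g x) + Real.log C
          + ((y - f x) / g x) * Real.log lam
          + (1 - (y - f x) / g x) * Real.log (1 - lam)
        = Real.log (pY y) - Real.log (k y) + Real.log C
          + ((x - h y) / k y) * Real.log lam
          + (1 - (x - h y) / k y) * Real.log (1 - lam)) :
    (∀ x y : ℝ, deriv (fun t => 1 / g t) x = deriv (fun t => 1 / k t) y) ∧
    ∃ c : ℝ, (∀ x, deriv (fun t => 1 / g t) x = c) ∧ (∀ y, deriv (fun t => 1 / k t) y = c) := by
  have h1lam : 0 < 1 - lam := by linarith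
  have hL : Real.log lam - Real.log (1 - lam) ≠ 0 := by
    intro hlog
    have hlog' : Real.log lam = Real.log (1 - lam) := by linarith
    have := Real.log_injOn_pos (Set.mem_Ioi.mpr hlam0) (Set.mem_Ioi.mpr h1lam) hlog'
    exact hlamhalf (by linarith)
  -- double-difference identity
  have key : ∀ x y : ℝ, y * (1 / g x - 1 / g 0) = x * (1 / k y - 1 / k 0) := by
    intro x y
    have h1 := hjoint x y
    have h2 := hjoint x 0
    have h3 := hjoint 0 y
    have h4 := hjoint 0 0
    have hcomb : (Real.log lam - Real.log (1 - lam)) * (y * (1 / g x - 1 / g 0))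
        = (Real.log lam - Real.log (1 - lam)) * (x * (1 / k y - 1 / k 0)) := by
      linear_combination h1 - h2 - h3 + h4
    exact mul_left_cancel₀ hL hcomb
  set c : ℝ := 1 / k 1 - 1 / k 0 with hc
  have hg_aff : ∀ x, 1 / g x = c * x + 1 / g 0 := by
    intro x
    have h1 := key x 1
    linear_combination h1
  have hk_aff : ∀ y, 1 / k y = c * y + 1 / k 0 := by
    intro y
    have h1 := key 1 y
    have h2 := key 1 1
    linear_combination y * h2 - h1
  have hgf : (fun t => 1 / g t) = fun t => c * t + 1 / g 0 := funext hg_aff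
  have hkf : (fun t => 1 / k t) = fun t => c * t + 1 / k 0 := funext hk_aff
  have hdg : ∀ x, deriv (fun t => 1 / g t) x = c := by
    intro x
    rw [hgf]
    have : HasDerivAt (fun t : ℝ => c * t + 1 / g 0) (c * 1) x :=
      ((hasDerivAt_id x).const_mul c).add_const _
    simpa using this.deriv
  have hdk : ∀ y, deriv (fun t => 1 / k t) y = c := by
    intro y
    rw [hkf]
    have : HasDerivAt (fun t : ℝ => c * t + 1 / k 0) (c * 1) y :=
      ((hasDerivAt_id y).const_mul c).add_const _
    simpa using this.deriv
  exact ⟨fun x y => by rw [hdg x, hdk y], c, hdg, hdk⟩
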